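/- arXiv:1705.07277 — 2 statements merged into one kernel-verified Lean document; each statement's English description precedes it below -/
import Mathlib

section
/- Let β > 1. Suppose w₁⋯wₙ is admissible and wₙ ≠ 0. Then for any digit wₙ′ with wₙ′ < wₙ, the word w₁⋯w_{n−1}wₙ′ is full. -/
noncomputable def Tb (β x : ℝ) : ℝ := β * x - ⌊β * x⌋

/-- The (i+1)-th digit of the β-expansion of x (0-indexed). -/
noncomputable def dig (β x : ℝ) (i : ℕ) : ℕ := (⌊β * (Tb β)^[i] x⌋).toNat

/-- w is an admissible word for base β. -/
def Adm (β : ℝ) (w : List ℕ) : Prop :=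
  ∃ x, x ∈ Set.Ico (0:ℝ) 1 ∧ ∀ i (h : i < w.length), w[i] = dig β x i

/-- u is an admissible digit sequence for base β. -/
def AdmSeq (β : ℝ) (u : ℕ → ℕ) : Prop :=
  ∃ x, x ∈ Set.Ico (0:ℝ) 1 ∧ ∀ i, u i = dig β x i

/-- The cylinder I(w) ⊆ [0,1). -/
def cyl (β : ℝ) (w : List ℕ) : Set ℝ :=
  {x | x ∈ Set.Ico (0:ℝ) 1 ∧ ∀ i (h : i < w.length), w[i] = dig β x i}

/-- w is a full word: T_β^{|w|} maps I(w) onto [0,1). -/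
def Full (β : ℝ) (w : List ℕ) : Prop :=
  (Tb β)^[w.length] '' cyl β w = Set.Ico 0 1

/-- The β-expansion of 1 is finite with length M. -/
def FiniteLen (β : ℝ) (M : ℕ) : Prop :=
  0 < M ∧ dig β 1 (M-1) ≠ 0 ∧ ∀ j, M ≤ j → dig β 1 j = 0

open Classical in
/-- The (i+1)-th digit of the modified β-expansion ε*(1,β) (0-indexed). -/
noncomputable def modExp (β : ℝ) (i : ℕ) : ℕ :=
  if h : ∃ M, FiniteLen β M then
    (if (i+1) % (Nat.find h) = 0 then dig β 1 (Nat.find h - 1) - 1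
     else dig β 1 (i % Nat.find h))
  else dig β 1 i

/-- View a finite word as the sequence w0^∞. -/
def wordSeq (w : List ℕ) (i : ℕ) : ℕ := w.getD i 0

/-- Strict lexicographic order on sequences. -/
def seqLt (u v : ℕ → ℕ) : Prop := ∃ k, (∀ i, i < k → u i = v i) ∧ u k < v k

/-- Strict lexicographic order on finite words (identified with w0^∞). -/
def wlt (u v : List ℕ) : Prop := seqLt (wordSeq u) (wordSeq v)

/-- Concatenation of a finite word with a sequence. -/
def catSeq (w : List ℕ) (u : ℕ → ℕ) (i : ℕ) : ℕ :=
  if h : i < w.length then w[i] else u (i - w.length)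

open Classical in
/-- The largest position k ≤ s with ε_k ≠ 0 (greedy step). -/
noncomputable def greedyStep (β : ℝ) (s : ℕ) : ℕ :=
  Nat.findGreatest (fun k => 1 ≤ k ∧ dig β 1 (k-1) ≠ 0) s

/-- τ_β(s): number of terms in the greedy representation of s by nonzero positions. -/
noncomputable def tau (β : ℝ) : ℕ → ℕ
  | 0 => 0
  | s + 1 => tau β (s - (greedyStep β (s+1) - 1)) + 1
decreasing_by omega

open Classical in
/-- r_s(β): maximal length of a string of 0's in ε₁*⋯ε_s*. -/
noncomputable def rrun (β : ℝ) (s : ℕ) : ℕ :=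
  Nat.findGreatest (fun k => 1 ≤ k ∧ ∃ i, i + k ≤ s ∧ ∀ t, t < k → modExp β (i + t) = 0) s

/-- v is the immediate successor of u in the lexicographic order on Σ_β^n. -/
def SuccIn (β : ℝ) (n : ℕ) (u v : List ℕ) : Prop :=
  u.length = n ∧ v.length = n ∧ Adm β u ∧ Adm β v ∧ wlt u v ∧
  ¬ ∃ z : List ℕ, z.length = n ∧ Adm β z ∧ wlt u z ∧ wlt z v

/-- There is a run of l consecutive non-full words in Σ_β^n. -/
def NonFullRun (β : ℝ) (n l : ℕ) : Prop :=
  ∃ f : ℕ → List ℕ,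
    (∀ j, j < l → (f j).length = n ∧ Adm β (f j) ∧ ¬ Full β (f j)) ∧
    (∀ j, j + 1 < l → SuccIn β n (f j) (f (j+1)))

/-- There is a maximal run of l consecutive non-full words in Σ_β^n. -/
def MaxNonFullRun (β : ℝ) (n l : ℕ) : Prop :=
  0 < l ∧ ∃ f : ℕ → List ℕ,
    (∀ j, j < l → (f j).length = n ∧ Adm β (f j) ∧ ¬ Full β (f j)) ∧
    (∀ j, j + 1 < l → SuccIn β n (f j) (f (j+1))) ∧
    (∀ u, SuccIn β n u (f 0) → Full β u) ∧
    (∀ u, SuccIn β n (f (l-1)) u → Full β u)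

/-- There is a maximal run of l consecutive full words in Σ_β^n. -/
def MaxFullRun (β : ℝ) (n l : ℕ) : Prop :=
  0 < l ∧ ∃ f : ℕ → List ℕ,
    (∀ j, j < l → (f j).length = n ∧ Adm β (f j) ∧ Full β (f j)) ∧
    (∀ j, j + 1 < l → SuccIn β n (f j) (f (j+1))) ∧
    (∀ u, SuccIn β n u (f 0) → ¬ Full β u) ∧
    (∀ u, SuccIn β n (f (l-1)) u → ¬ Full β u)

/-- The canonical decomposition of an admissible word, as in the structure theorem:
p.1 is the list of block lengths k₁,…,k_p and p.2 is the final length l. -/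
def Decomp (β : ℝ) (w : List ℕ) (p : List ℕ × ℕ) : Prop :=
  1 ≤ p.2 ∧ (∀ k ∈ p.1, 1 ≤ k) ∧ p.1.sum + p.2 = w.length ∧
  (∀ j, j < p.1.length →
    (∀ t, t < p.1.getD j 0 - 1 → w.getD ((p.1.take j).sum + t) 0 = dig β 1 t) ∧
    w.getD ((p.1.take j).sum + (p.1.getD j 0 - 1)) 0 < dig β 1 (p.1.getD j 0 - 1)) ∧
  (∀ t, t < p.2 - 1 → w.getD (p.1.sum + t) 0 = dig β 1 t) ∧
  w.getD (p.1.sum + (p.2 - 1)) 0 ≤ dig β 1 (p.2 - 1)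

lemma Tb_mem_Ico (β x : ℝ) : Tb β x ∈ Set.Ico (0:ℝ) 1 := by
  unfold Tb
  constructor
  · have := Int.floor_le (β * x); linarith
  · have := Int.lt_floor_add_one (β * x); linarith

lemma Tb_iter_mem (β : ℝ) {x : ℝ} (hx : x ∈ Set.Ico (0:ℝ) 1) :
    ∀ k, (Tb β)^[k] x ∈ Set.Ico (0:ℝ) 1 := by
  intro k
  induction k with
  | zero => exact hx
  | succ k _ => rw [Function.iterate_succ_apply']; exact Tb_mem_Ico β _

noncomputable def bval (β : ℝ) : List ℕ → ℝ → ℝ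
  | [], t => t
  | d :: u, t => ((d : ℝ) + bval β u t) / β

lemma bval_nonneg {β : ℝ} (hβ : 0 < β) {t : ℝ} (ht : 0 ≤ t) :
    ∀ u : List ℕ, 0 ≤ bval β u t
  | [] => ht
  | d :: u => by
      have h1 := bval_nonneg hβ ht u
      have h2 : (0:ℝ) ≤ (d:ℝ) + bval β u t :=
        add_nonneg (Nat.cast_nonneg d) h1
      exact div_nonneg h2 hβ.le

lemma bval_key {β : ℝ} (hβ : 1 < β) :
    ∀ (u : List ℕ) (t : ℝ),
      (∀ k, k ≤ u.length → bval β (u.drop k) t ∈ Set.Ico (0:ℝ) 1) →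
      (∀ i (h : i < u.length), dig β (bval β u t) i = u[i]) ∧
      (Tb β)^[u.length] (bval β u t) = t := by
  intro u
  induction u with
  | nil =>
    intro t _
    exact ⟨fun i h => absurd h (by simp), rfl⟩
  | cons d u ih =>
    intro t hk
    have hβ0 : (0:ℝ) < β := lt_trans one_pos hβ
    have hv : bval β u t ∈ Set.Ico (0:ℝ) 1 := hk 1 (by simp)
    have hx : β * bval β (d :: u) t = (d : ℝ) + bval β u t := by
      show β * (((d:ℝ) + bval β u t) / β) = _
      field_simp
    have hfl : ⌊β * bval β (d :: u) t⌋ = (d : ℤ) := by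
      rw [hx]
      have h0 : ⌊bval β u t⌋ = 0 := by
        rw [Int.floor_eq_zero_iff]; exact hv
      have he : ((d:ℕ):ℝ) = (((d:ℕ):ℤ):ℝ) := by push_cast; ring
      rw [he, Int.floor_intCast_add, h0, add_zero]
    have hT : Tb β (bval β (d :: u) t) = bval β u t := by
      unfold Tb
      rw [hfl, hx]; push_cast; ring
    obtain ⟨hd2, hit⟩ := ih t (fun k hk' => hk (k+1) (by simpa using hk'))
    constructor
    · intro i hi
      cases i with
      | zero =>
        show (⌊β * (Tb β)^[0] (bval β (d :: u) t)⌋).toNat = _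
        rw [Function.iterate_zero_apply, hfl]
        simp
      | succ i =>
        show (⌊β * (Tb β)^[i+1] (bval β (d :: u) t)⌋).toNat = _
        rw [Function.iterate_succ_apply, hT]
        have := hd2 i (by simpa using hi)
        simpa [dig] using this
    · show (Tb β)^[u.length + 1] (bval β (d :: u) t) = t
      rw [Function.iterate_succ_apply, hT, hit]

/-- decreasing the last nonzero digit of an admissible word gives a full word. -/
theorem stmt5 (β : ℝ) (hβ : 1 < β) (w : List ℕ) (hne : w ≠ []) (h : Adm β w)
    (hlast : w.getLast hne ≠ 0) (a : ℕ) (ha : a < w.getLast hne) :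
    Full β (w.dropLast ++ [a]) := by
  have hβ0 : (0:ℝ) < β := lt_trans one_pos hβ
  set n := w.length with hn
  have hn0 : 0 < n := List.length_pos_iff.mpr hne
  obtain ⟨y, hy, hdig⟩ := h
  set w' : List ℕ := w.dropLast ++ [a] with hw'
  have hlen : w'.length = n := by
    rw [hw']; simp [List.length_dropLast]; omega
  have hget1 : ∀ (i : ℕ) (hi : i < n - 1),
      w'[i]'(by omega) = w[i]'(by omega) := by
    intro i hi
    have h1 : i < w.dropLast.length := by simp [List.length_dropLast]; omega
    exact (List.getElem_append_left h1 (h' := by simp [List.length_dropLast]; omega)).trans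
      (List.getElem_dropLast h1)
  have hget2 : w'[n-1]'(by omega) = a := by
    have h1 : w.dropLast.length ≤ n - 1 := by simp [List.length_dropLast]; omega
    calc w'[n-1]'(by omega)
        = [a][n - 1 - w.dropLast.length]'(by simp [List.length_dropLast]; omega) :=
          List.getElem_append_right h1
      _ = a := by simp
  have hlast' : w[n-1]'(by omega) = w.getLast hne := by
    rw [List.getLast_eq_getElem]
  have hflr : ∀ (k : ℕ) (hk : k < n),
      (⌊β * (Tb β)^[k] y⌋ : ℝ) = ((w[k]'hk : ℕ) : ℝ) := by
    intro k hk
    have h1 := hdig k hk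
    have h2 : 0 ≤ ⌊β * (Tb β)^[k] y⌋ :=
      Int.floor_nonneg.mpr (mul_nonneg hβ0.le (Tb_iter_mem β hy k).1)
    have h3 : ((⌊β * (Tb β)^[k] y⌋).toNat : ℤ) = ⌊β * (Tb β)^[k] y⌋ :=
      Int.toNat_of_nonneg h2
    rw [h1]
    unfold dig
    exact_mod_cast h3.symm
  have hstep : ∀ (k : ℕ) (hk : k < n),
      (Tb β)^[k+1] y = β * (Tb β)^[k] y - ((w[k]'hk : ℕ) : ℝ) := by
    intro k hk
    have hf := hflr k hk
    rw [Function.iterate_succ_apply']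
    generalize hz : (Tb β)^[k] y = z at hf ⊢
    unfold Tb
    rw [hf]
  rw [show Full β (w.dropLast ++ [a]) = Full β w' from rfl]
  unfold Full
  apply Set.eq_of_subset_of_subset
  · rintro z ⟨x, ⟨hx1, _⟩, rfl⟩
    exact Tb_iter_mem β hx1 _
  · intro t ht
    -- chain inequality
    have hchain : ∀ j, j < n → bval β (w'.drop (n-1-j)) t < (Tb β)^[n-1-j] y := by
      intro j
      induction j with
      | zero =>
        intro _
        have hd : w'.drop (n-1) = [a] := by
          rw [hw']
          have he : n - 1 = w.dropLast.length := by
            simp [List.length_dropLast]; omega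
          rw [he, List.drop_left]
        simp only [Nat.sub_zero, hd]
        show ((a:ℝ) + t) / β < (Tb β)^[n-1] y
        have h1 := hstep (n-1) (by omega)
        have h2 : (0:ℝ) ≤ (Tb β)^[(n-1)+1] y := (Tb_iter_mem β hy _).1
        have h3 : (a:ℝ) + 1 ≤ ((w[n-1]'(by omega) : ℕ) : ℝ) := by
          have : a + 1 ≤ w[n-1]'(by omega) := by
            rw [hlast']; omega
          exact_mod_cast this
        rw [div_lt_iff₀ hβ0]
        have ht2 : t < 1 := ht.2
        nlinarith
      | succ j ihj =>
        intro hj1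
        have ih := ihj (by omega)
        have hk1 : (n-1-(j+1)) + 1 = n-1-j := by omega
        set k := n-1-(j+1) with hkdef
        have hkn : k < n - 1 := by omega
        have hd : w'.drop k = (w'[k]'(by omega)) :: w'.drop (k+1) :=
          List.drop_eq_getElem_cons (by omega)
        rw [hd]
        show (((w'[k]'(by omega) : ℕ) : ℝ) + bval β (w'.drop (k+1)) t) / β < (Tb β)^[k] y
        rw [div_lt_iff₀ hβ0]
        have hstep' := hstep k (by omega)
        rw [← hk1] at ih
        have hgk : ((w'[k]'(by omega) : ℕ) : ℝ) = ((w[k]'(by omega) : ℕ) : ℝ) := by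
          exact_mod_cast congrArg (Nat.cast (R := ℝ)) (hget1 k hkn)
        rw [hgk]
        linarith [ih, hstep']
    have hmem : ∀ k, k ≤ w'.length → bval β (w'.drop k) t ∈ Set.Ico (0:ℝ) 1 := by
      intro k hkle
      rw [hlen] at hkle
      rcases eq_or_lt_of_le hkle with hkeq | hklt
      · subst hkeq
        rw [← hlen, List.drop_length]
        exact ht
      · refine ⟨bval_nonneg hβ0 ht.1 _, ?_⟩
        have hj : n - 1 - (n - 1 - k) = k := by omega
        have := hchain (n-1-k) (by omega)
        rw [hj] at this
        exact lt_of_lt_of_le this (Tb_iter_mem β hy k).2.le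
    obtain ⟨hdigs, hiter⟩ := bval_key hβ w' t hmem
    refine ⟨bval β w' t, ⟨?_, fun i hi => (hdigs i hi).symm⟩, hiter⟩
    have := hmem 0 (Nat.zero_le _)
    rwa [List.drop_zero] at this
end

section
/- Let β > 1 and w ∈ Σ_β^n an admissible word. Then w can be uniquely decomposed as ε₁⋯ε_{k₁−1}w_{n₁} ε₁⋯ε_{k₂−1}w_{n₂} ⋯ ε₁⋯ε_{k_p−1}w_{n_p} ε₁⋯ε_{l−1}wₙ, where p ≥ 0, k₁,…,k_p, l ∈ ℕ with n = k₁ + ⋯ + k_p + l, nⱼ = k₁ + ⋯ + kⱼ, w_{nⱼ} < ε_{kⱼ} for all 1 ≤ j ≤ p, and wₙ ≤ ε_l. Moreover the blocks ε₁⋯ε_{kⱼ−1}w_{nⱼ} are all full, and if ε(1,β) is finite with length M then k₁,…,k_p, l ≤ M, and in the case l = M necessarily wₙ < ε_M. -/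
section
variable {β : ℝ}

lemma Tb_mem (x : ℝ) : Tb β x ∈ Set.Ico (0:ℝ) 1 := by
  have h : Tb β x = Int.fract (β * x) := rfl
  rw [h]; exact ⟨Int.fract_nonneg _, Int.fract_lt_one _⟩

lemma iter_mem {x : ℝ} (hx : x ∈ Set.Ico (0:ℝ) 1) (i : ℕ) :
    (Tb β)^[i] x ∈ Set.Ico (0:ℝ) 1 := by
  induction i with
  | zero => exact hx
  | succ n ih => rw [Function.iterate_succ_apply']; exact Tb_mem _

lemma iter_pos_mem (x : ℝ) {i : ℕ} (hi : 1 ≤ i) : (Tb β)^[i] x ∈ Set.Ico (0:ℝ) 1 := by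
  obtain ⟨j, rfl⟩ := Nat.exists_eq_add_of_le hi
  rw [add_comm, Function.iterate_succ_apply']; exact Tb_mem _

lemma iter_one_nonneg (i : ℕ) : 0 ≤ (Tb β)^[i] (1:ℝ) := by
  cases i with
  | zero => norm_num
  | succ n => exact (iter_pos_mem 1 (Nat.succ_le_succ (Nat.zero_le n))).1

lemma iter_one_le (i : ℕ) : (Tb β)^[i] (1:ℝ) ≤ 1 := by
  cases i with
  | zero => norm_num
  | succ n => exact le_of_lt (iter_pos_mem 1 (Nat.succ_le_succ (Nat.zero_le n))).2

lemma dig_cast (hβ : 1 < β) {x : ℝ} {i : ℕ} (h : 0 ≤ (Tb β)^[i] x) :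
    ((dig β x i : ℤ)) = ⌊β * (Tb β)^[i] x⌋ :=
  Int.toNat_of_nonneg (Int.floor_nonneg.mpr (mul_nonneg (by linarith) h))

lemma Tb_step (hβ : 1 < β) {x : ℝ} {i : ℕ} (h : 0 ≤ (Tb β)^[i] x) :
    (Tb β)^[i+1] x = β * (Tb β)^[i] x - (dig β x i : ℝ) := by
  rw [Function.iterate_succ_apply']
  have : ((dig β x i : ℝ)) = (⌊β * (Tb β)^[i] x⌋ : ℝ) := by
    rw [← dig_cast hβ h]; push_cast; ring
  rw [this]; rfl

lemma dig_le_mul (hβ : 1 < β) {x : ℝ} {i : ℕ} (h : 0 ≤ (Tb β)^[i] x) :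
    (dig β x i : ℝ) ≤ β * (Tb β)^[i] x := by
  have := dig_cast hβ h
  calc (dig β x i : ℝ) = (⌊β * (Tb β)^[i] x⌋ : ℝ) := by rw [← this]; push_cast; ring
  _ ≤ _ := Int.floor_le _

lemma agree (hβ : 1 < β) {x : ℝ} (hx : x ∈ Set.Ico (0:ℝ) 1) {i : ℕ}
    (h : ∀ t, t < i → dig β x t = dig β 1 t) :
    (Tb β)^[i] x = (Tb β)^[i] 1 + β ^ i * (x - 1) := by
  induction i with
  | zero => simp
  | succ n ih =>
    have hn := ih (fun t ht => h t (Nat.lt_succ_of_lt ht))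
    rw [Tb_step hβ (iter_mem hx n).1, Tb_step hβ (iter_one_nonneg n), hn,
      h n (Nat.lt_succ_self n)]
    ring

lemma dig_le (hβ : 1 < β) {x : ℝ} (hx : x ∈ Set.Ico (0:ℝ) 1) {i : ℕ}
    (h : ∀ t, t < i → dig β x t = dig β 1 t) : dig β x i ≤ dig β 1 i := by
  have hle : (Tb β)^[i] x ≤ (Tb β)^[i] 1 := by
    rw [agree hβ hx h]
    nlinarith [pow_pos (lt_trans one_pos hβ) i, hx.2]
  have : ⌊β * (Tb β)^[i] x⌋ ≤ ⌊β * (Tb β)^[i] 1⌋ :=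
    Int.floor_le_floor (by nlinarith)
  exact Int.toNat_le_toNat this

end
section
variable {β : ℝ}

lemma getD_drop' (w : List ℕ) (m t : ℕ) : (w.drop m).getD t 0 = w.getD (m + t) 0 := by
  simp [List.getD_eq_getElem?_getD, List.getElem?_drop]

lemma adm_dig {w : List ℕ} {x : ℝ}
    (h : ∀ i (h : i < w.length), w[i] = dig β x i) {i : ℕ} (hi : i < w.length) :
    w.getD i 0 = dig β x i := by
  rw [List.getD_eq_getElem w 0 hi]; exact h i hi

lemma dig_shift (x : ℝ) (m t : ℕ) : dig β ((Tb β)^[m] x) t = dig β x (m + t) := by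
  unfold dig
  rw [← Function.iterate_add_apply, add_comm t m]

lemma adm_drop {w : List ℕ} (hw : Adm β w) (m : ℕ) : Adm β (w.drop m) := by
  obtain ⟨x, hx, h⟩ := hw
  exact ⟨(Tb β)^[m] x, iter_mem hx m, fun i hi => by
    rw [List.getElem_drop, h (m + i) (by have := hi; simp [List.length_drop] at this; omega)]
    · exact (dig_shift x m i).symm⟩

end
section
variable {β : ℝ}

lemma decomp_cons {w : List ℕ} {k l : ℕ} {ks : List ℕ}
    (hk : 1 ≤ k) (hkle : k ≤ w.length)
    (hpre : ∀ t, t < k - 1 → w.getD t 0 = dig β 1 t)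
    (hlt : w.getD (k-1) 0 < dig β 1 (k-1))
    (hd : Decomp β (w.drop k) (ks, l)) : Decomp β w (k :: ks, l) := by
  obtain ⟨h1, h2, h3, h4, h5, h6⟩ := hd
  simp only [List.length_drop] at h3
  refine ⟨h1, ?_, ?_, ?_, ?_, ?_⟩
  · intro k' hk'
    rcases List.mem_cons.mp hk' with rfl | h
    · exact hk
    · exact h2 k' h
  · simp only [List.sum_cons]; omega
  · intro j hj
    cases j with
    | zero =>
      simp only [List.take_zero, List.sum_nil, List.getD_cons_zero, zero_add]
      exact ⟨hpre, hlt⟩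
    | succ j =>
      simp only [List.length_cons, Nat.succ_lt_succ_iff] at hj
      have := h4 j hj
      simp only [List.take_succ_cons, List.sum_cons, List.getD_cons_succ]
      constructor
      · intro t ht
        have := (h4 j hj).1 t ht
        rwa [getD_drop', ← add_assoc] at this
      · have := (h4 j hj).2
        rwa [getD_drop', ← add_assoc] at this
  · intro t ht
    have := h5 t ht
    simp only [List.sum_cons]
    rwa [getD_drop', ← add_assoc] at this
  · have := h6
    simp only [List.sum_cons]
    rwa [getD_drop', ← add_assoc] at this

lemma decomp_drop {w : List ℕ} {k l : ℕ} {ks : List ℕ}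
    (hd : Decomp β w (k :: ks, l)) : Decomp β (w.drop k) (ks, l) := by
  obtain ⟨h1, h2, h3, h4, h5, h6⟩ := hd
  simp only [List.sum_cons] at h3
  refine ⟨h1, fun k' h => h2 k' (List.mem_cons_of_mem _ h), ?_, ?_, ?_, ?_⟩
  · simp only [List.length_drop]; omega
  · intro j hj
    have := h4 (j+1) (by simpa using Nat.succ_lt_succ hj)
    simp only [List.take_succ_cons, List.sum_cons, List.getD_cons_succ] at this
    constructor
    · intro t ht
      have := this.1 t ht
      rwa [add_assoc, ← getD_drop'] at this
    · have := this.2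
      rwa [add_assoc, ← getD_drop'] at this
  · intro t ht
    have := h5 t ht
    simp only [List.sum_cons] at this
    rwa [add_assoc, ← getD_drop'] at this
  · have := h6
    simp only [List.sum_cons] at this
    rwa [add_assoc, ← getD_drop'] at this

end
section
variable {β : ℝ}

lemma decomp_exists (hβ : 1 < β) : ∀ n (w : List ℕ), w.length = n → Adm β w →
    0 < w.length → ∃ p : List ℕ × ℕ, Decomp β w p := by
  intro n
  induction n using Nat.strong_induction_on with
  | _ n ih =>
    intro w hlen hw hpos
    obtain ⟨x, hx, hdig⟩ := hw
    by_cases hA : ∃ t, t < w.length - 1 ∧ w.getD t 0 ≠ dig β 1 t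
    · classical
      set i := Nat.find hA with hidef
      have hi := Nat.find_spec hA
      have hleast : ∀ t, t < i → w.getD t 0 = dig β 1 t := by
        intro t ht
        have := Nat.find_min hA ht
        push_neg at this
        exact this (by omega)
      have hagree : ∀ t, t < i → dig β x t = dig β 1 t := by
        intro t ht
        rw [← adm_dig hdig (by omega), hleast t ht]
      have hdx : w.getD i 0 = dig β x i := adm_dig hdig (by omega)
      have hle : w.getD i 0 ≤ dig β 1 i := by rw [hdx]; exact dig_le hβ hx hagree
      have hlt : w.getD i 0 < dig β 1 i := lt_of_le_of_ne hle hi.2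
      obtain ⟨⟨ks, l⟩, hd⟩ := ih (n - (i+1)) (by omega) (w.drop (i+1))
        (by simp [hlen]) (adm_drop ⟨x, hx, hdig⟩ _) (by simp [hlen]; omega)
      refine ⟨((i+1) :: ks, l), decomp_cons (by omega) (by omega) ?_ ?_ hd⟩
      · intro t ht
        exact hleast t (by omega)
      · simpa using hlt
    · push_neg at hA
      have hlast : w.getD (w.length - 1) 0 ≤ dig β 1 (w.length - 1) := by
        rw [adm_dig hdig (by omega)]
        exact dig_le hβ hx (fun t ht => by
          rw [← adm_dig hdig (by omega), hA t (by omega)])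
      exact ⟨([], w.length), by omega, by simp, by simp, by simp, fun t ht => by
        simpa using hA t (by omega), by simpa using hlast⟩

lemma decomp_nil_vs_cons {w : List ℕ} {k l l' : ℕ} {ks : List ℕ}
    (h1 : Decomp β w ([], l)) (h2 : Decomp β w (k :: ks, l')) : False := by
  obtain ⟨a1, a2, a3, a4, a5, a6⟩ := h1
  obtain ⟨b1, b2, b3, b4, b5, b6⟩ := h2
  simp only [List.sum_nil, List.sum_cons, zero_add] at a3 a5 b3
  have hb := b4 0 (by simp)
  simp only [List.take_zero, List.sum_nil, List.getD_cons_zero, zero_add] at hb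
  have hk := b2 k (List.mem_cons_self)
  have := a5 (k - 1) (by omega)
  rw [this] at hb
  exact lt_irrefl _ hb.2

lemma decomp_unique : ∀ n (w : List ℕ), w.length = n →
    ∀ p q : List ℕ × ℕ, Decomp β w p → Decomp β w q → p = q := by
  intro n
  induction n using Nat.strong_induction_on with
  | _ n ih =>
    intro w hlen ⟨ks, l⟩ ⟨ks', l'⟩ hp hq
    match ks, ks' with
    | [], [] =>
      have h1 := hp.2.2.1
      have h2 := hq.2.2.1
      simp only [List.sum_nil, zero_add] at h1 h2
      simp [h1, h2]
    | [], k' :: ks' => exact absurd (decomp_nil_vs_cons hp hq) (not_false)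
    | k :: ks, [] => exact absurd (decomp_nil_vs_cons hq hp) (not_false)
    | k :: ks, k' :: ks' =>
      have hkk : k = k' := by
        by_contra hne
        have hb := hp.2.2.2.1 0 (by simp)
        have hb' := hq.2.2.2.1 0 (by simp)
        simp only [List.take_zero, List.sum_nil, List.getD_cons_zero, zero_add] at hb hb'
        have hk1 := hp.2.1 k (List.mem_cons_self)
        have hk1' := hq.2.1 k' (List.mem_cons_self)
        rcases Nat.lt_or_ge k k' with h | h
        · have := hb'.1 (k-1) (by omega)
          rw [this] at hb
          exact lt_irrefl _ hb.2
        · have := hb.1 (k'-1) (by omega)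
          rw [this] at hb'
          exact lt_irrefl _ hb'.2
      subst hkk
      have hd := decomp_drop hp
      have hd' := decomp_drop hq
      have hk1 := hp.2.1 k (List.mem_cons_self)
      have hsum := hp.2.2.1
      simp only [List.sum_cons] at hsum
      have := ih (n - k) (by omega) (w.drop k) (by simp [hlen]) _ _ hd hd'
      simp only [Prod.mk.injEq] at this ⊢
      exact ⟨by rw [this.1], this.2⟩
end
noncomputable def gaux (β : ℝ) (v : List ℕ) (y : ℝ) : ℕ → ℝ
  | 0 => y
  | m+1 => ((v.getD (v.length - 1 - m) 0 : ℝ) + gaux β v y m) / β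

section
variable {β : ℝ}

lemma gaux_inv (hβ : 1 < β) {v : List ℕ} (hk : 1 ≤ v.length)
    (hpre : ∀ t, t < v.length - 1 → v.getD t 0 = dig β 1 t)
    (hlast : v.getD (v.length - 1) 0 < dig β 1 (v.length - 1))
    {y : ℝ} (hy : y ∈ Set.Ico (0:ℝ) 1) :
    ∀ m, 1 ≤ m → m ≤ v.length →
      0 ≤ gaux β v y m ∧ gaux β v y m < (Tb β)^[v.length - m] 1 := by
  set k := v.length with hkdef
  have hβ0 : (0:ℝ) < β := by linarith
  intro m
  induction m with
  | zero => omega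
  | succ m ih =>
    intro _ hmk
    rcases Nat.eq_zero_or_pos m with rfl | hm
    · have hcast : (v.getD (k-1) 0 : ℝ) + 1 ≤ (dig β 1 (k-1) : ℝ) := by
        exact_mod_cast hlast
      have hd : (dig β 1 (k-1) : ℝ) ≤ β * (Tb β)^[k-1] 1 :=
        dig_le_mul hβ (iter_one_nonneg _)
      have h1 : gaux β v y 1 = ((v.getD (k-1) 0 : ℝ) + y) / β := by
        simp [gaux, hkdef]
      rw [h1]
      constructor
      · apply div_nonneg _ (le_of_lt hβ0)
        have := hy.1
        positivity
      · rw [div_lt_iff₀ hβ0, mul_comm]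
        have := hy.2
        linarith
    · obtain ⟨h0, h1⟩ := ih (by omega) (by omega)
      have hkm : k - 1 - m = k - m - 1 := by omega
      have hsucc : k - m - 1 + 1 = k - m := by omega
      have hvd : v.getD (k-1-m) 0 = dig β 1 (k-m-1) := by
        rw [hkm]; exact hpre _ (by omega)
      have hT : (Tb β)^[k-m] (1:ℝ) = β * (Tb β)^[k-m-1] 1 - (dig β 1 (k-m-1) : ℝ) := by
        rw [← hsucc]; exact Tb_step hβ (iter_one_nonneg _)
      have hg : gaux β v y (m+1) = ((dig β 1 (k-m-1) : ℝ) + gaux β v y m) / β := by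
        simp only [gaux, ← hkdef, hvd]
      rw [hg]
      constructor
      · positivity
      · rw [div_lt_iff₀ hβ0, mul_comm]
        have : k - (m+1) = k - m - 1 := by omega
        rw [this]
        linarith [hT, h1]

lemma gaux_floor (hβ : 1 < β) {v : List ℕ} (hk : 1 ≤ v.length)
    (hpre : ∀ t, t < v.length - 1 → v.getD t 0 = dig β 1 t)
    (hlast : v.getD (v.length - 1) 0 < dig β 1 (v.length - 1))
    {y : ℝ} (hy : y ∈ Set.Ico (0:ℝ) 1) {m : ℕ} (hm : m < v.length) :
    β * gaux β v y (v.length - m) = (v.getD m 0 : ℝ) + gaux β v y (v.length - m - 1) ∧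
    ⌊β * gaux β v y (v.length - m)⌋ = (v.getD m 0 : ℤ) := by
  set k := v.length with hkdef
  have hβ0 : (0:ℝ) < β := by linarith
  have hsucc : k - m - 1 + 1 = k - m := by omega
  have hidx : k - 1 - (k - m - 1) = m := by omega
  have heq : β * gaux β v y (k - m) = (v.getD m 0 : ℝ) + gaux β v y (k - m - 1) := by
    conv_lhs => rw [← hsucc]
    simp only [gaux, ← hkdef, hidx]
    field_simp
  have hg' : 0 ≤ gaux β v y (k - m - 1) ∧ gaux β v y (k - m - 1) < 1 := by
    rcases Nat.eq_zero_or_pos (k - m - 1) with h0 | h0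
    · rw [h0]; exact ⟨hy.1, hy.2⟩
    · obtain ⟨a, b⟩ := gaux_inv hβ hk hpre hlast hy (k-m-1) h0 (by omega)
      refine ⟨a, lt_of_lt_of_le b (iter_one_le _)⟩
  refine ⟨heq, ?_⟩
  rw [heq, Int.floor_eq_iff]
  push_cast
  constructor <;> linarith [hg'.1, hg'.2]

lemma full_block (hβ : 1 < β) {v : List ℕ} (hk : 1 ≤ v.length)
    (hpre : ∀ t, t < v.length - 1 → v.getD t 0 = dig β 1 t)
    (hlast : v.getD (v.length - 1) 0 < dig β 1 (v.length - 1)) : Full β v := by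
  set k := v.length with hkdef
  apply Set.eq_of_subset_of_subset
  · rintro y ⟨x, hxc, rfl⟩
    exact iter_pos_mem x hk
  · intro y hy
    set x := gaux β v y k with hxdef
    have hx : x ∈ Set.Ico (0:ℝ) 1 := by
      obtain ⟨a, b⟩ := gaux_inv hβ hk hpre hlast hy k hk le_rfl
      simp only [hkdef, Nat.sub_self, Function.iterate_zero_apply] at b
      exact ⟨a, b⟩
    have hiter : ∀ m, m ≤ k → (Tb β)^[m] x = gaux β v y (k - m) := by
      intro m
      induction m with
      | zero => intro _; simp [hxdef]
      | succ m ih =>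
        intro hmk
        have hprev := ih (by omega)
        obtain ⟨heq, hfl⟩ := gaux_floor hβ hk hpre hlast hy (show m < k by omega)
        rw [Function.iterate_succ_apply', hprev]
        show β * gaux β v y (k - m) - (⌊β * gaux β v y (k - m)⌋ : ℝ) = _
        rw [hfl, heq]
        push_cast
        have : k - (m+1) = k - m - 1 := by omega
        rw [this]; ring
    have hdig : ∀ i (h : i < k), v[i] = dig β x i := by
      intro i hi
      obtain ⟨heq, hfl⟩ := gaux_floor hβ hk hpre hlast hy hi
      unfold dig
      rw [hiter i (le_of_lt hi), hfl, Int.toNat_natCast]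
      exact (List.getD_eq_getElem v 0 hi).symm
    refine ⟨x, ⟨hx, hdig⟩, ?_⟩
    rw [hiter k le_rfl, Nat.sub_self]
    rfl
end
section
variable {β : ℝ}

lemma TM_one_zero (hβ : 1 < β) {M : ℕ} (hM : FiniteLen β M) : (Tb β)^[M] (1:ℝ) = 0 := by
  have hgrow : ∀ m, (Tb β)^[M + m] (1:ℝ) = β ^ m * (Tb β)^[M] 1 := by
    intro m
    induction m with
    | zero => simp
    | succ m ih =>
      have : M + (m+1) = (M + m) + 1 := by omega
      rw [this, Tb_step hβ (iter_one_nonneg _), ih, hM.2.2 (M+m) (by omega)]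
      push_cast
      ring
  have h0 : 0 ≤ (Tb β)^[M] (1:ℝ) := iter_one_nonneg M
  by_contra hne
  have hpos : 0 < (Tb β)^[M] (1:ℝ) := lt_of_le_of_ne h0 (Ne.symm hne)
  obtain ⟨m, hm⟩ := pow_unbounded_of_one_lt (1 / (Tb β)^[M] (1:ℝ)) hβ
  have hub : (Tb β)^[M + m] (1:ℝ) < 1 := (iter_pos_mem 1 (by have := hM.1; omega)).2
  rw [hgrow] at hub
  rw [div_lt_iff₀ hpos] at hm
  linarith

lemma no_agree_finite (hβ : 1 < β) {M : ℕ} (hM : FiniteLen β M) {x : ℝ}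
    (hx : x ∈ Set.Ico (0:ℝ) 1) (h : ∀ t, t < M → dig β x t = dig β 1 t) : False := by
  have h1 := agree hβ hx h
  rw [TM_one_zero hβ hM] at h1
  have h2 : 0 ≤ (Tb β)^[M] x := (iter_mem hx M).1
  have h3 : (0:ℝ) < β ^ M := pow_pos (by linarith) M
  nlinarith [hx.2]

end
/-- structure theorem — every admissible word has a unique canonical
decomposition; its blocks are full, and in the finite case the block lengths
are at most M, with strict final inequality when l = M. -/
theorem stmt9 (β : ℝ) (hβ : 1 < β) (w : List ℕ) (hw : Adm β w) (hne : 0 < w.length) :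
    (∃! p : List ℕ × ℕ, Decomp β w p) ∧
    (∀ ks l, Decomp β w (ks, l) →
      (∀ j, j < ks.length →
        Full β (List.ofFn (fun t : Fin (ks.getD j 0) => w.getD ((ks.take j).sum + t) 0))) ∧
      (∀ M, FiniteLen β M →
        (∀ k ∈ ks, k ≤ M) ∧ l ≤ M ∧
        (l = M → w.getD (w.length - 1) 0 < dig β 1 (M-1)))) := by
  constructor
  · obtain ⟨p, hp⟩ := decomp_exists hβ w.length w rfl hw hne
    exact ⟨p, hp, fun q hq => decomp_unique w.length w rfl q p hq hp⟩
  · intro ks l hd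
    obtain ⟨h1, h2, h3, h4, h5, h6⟩ := hd
    dsimp only at h1 h2 h3 h4 h5 h6
    constructor
    · -- fullness of blocks
      intro j hj
      set k := ks.getD j 0 with hkj
      set v : List ℕ := List.ofFn (fun t : Fin k => w.getD ((ks.take j).sum + t) 0) with hv
      have hlen : v.length = k := by simp [hv]
      have hk1 : 1 ≤ k := by
        rw [hkj, List.getD_eq_getElem ks 0 hj]
        exact h2 _ (List.getElem_mem hj)
      have hvget : ∀ t, t < k → v.getD t 0 = w.getD ((ks.take j).sum + t) 0 := by
        intro t ht
        have ht' : t < v.length := by omega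
        rw [List.getD_eq_getElem v 0 ht']
        simp [hv]
      obtain ⟨hb1, hb2⟩ := h4 j hj
      apply full_block hβ (by omega)
      · intro t ht
        rw [hlen] at ht
        rw [hvget t (by omega)]
        exact hb1 t ht
      · rw [hlen, hvget (k-1) (by omega)]
        exact hb2
    · -- finite length bounds
      intro M hM
      obtain ⟨x, hx, hdigx⟩ := hw
      have hx' : (Tb β)^[ks.sum] x ∈ Set.Ico (0:ℝ) 1 := iter_mem hx ks.sum
      have hdig' : ∀ t, t < l → dig β ((Tb β)^[ks.sum] x) t = w.getD (ks.sum + t) 0 := by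
        intro t ht
        rw [dig_shift, ← adm_dig hdigx (by omega)]
      have hkM : ∀ k ∈ ks, k ≤ M := by
        intro k hkmem
        by_contra hgt
        push_neg at hgt
        obtain ⟨j, hj, rfl⟩ := List.getElem_of_mem hkmem
        have hb := (h4 j hj).2
        rw [List.getD_eq_getElem ks 0 hj] at hb
        rw [hM.2.2 (ks[j] - 1) (by omega)] at hb
        omega
      have hlM : l ≤ M := by
        by_contra hgt
        push_neg at hgt
        refine no_agree_finite hβ hM hx' (fun t ht => ?_)
        rw [hdig' t (by omega)]
        exact h5 t (by omega)
      refine ⟨hkM, hlM, fun hlM' => ?_⟩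
      subst hlM'
      have hwl : w.length - 1 = ks.sum + (l - 1) := by omega
      rw [hwl]
      rcases lt_or_eq_of_le h6 with h | h
      · exact h
      · exfalso
        refine no_agree_finite hβ hM hx' (fun t ht => ?_)
        rw [hdig' t (by omega)]
        rcases Nat.lt_or_ge t (l - 1) with h' | h'
        · exact h5 t h'
        · have htl : t = l - 1 := by omega
          rw [htl, h]
end
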